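/- Let l : V → V be differentiable, null for η (η(l x, l x) = 0) and flat-geodesic (fderiv l x (l x) = φ x • l x for a scalar field φ). Let μ : V → ℝ and v : V → (V → ℝ) be differentiable, let γ ∈ ℝ, and let g be the perturbed metric g x = (1 + γ·μ x) • η + γ • (l⁰ x ⊗ v x + v x ⊗ l⁰ x). Set F x = 1 + γ·(μ x + v x (l x)). Then the Lie derivative along l of the covector field x ↦ g x (l x, ·) satisfies (L_l (g♭ l)) x (w) = (fderiv F x (l x) + F x · φ x) · η(l x, w) for all x, w. In particular, wherever F x ≠ 0, (L_l (g♭ l)) x = ψ x • (g x (l x, ·)) with ψ x = φ x + (fderiv F x (l x)) / F x, which expresses that l is geodesic with respect to g. -/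

import Mathlib

/-- The Lie derivative of a (differentiable) covector field `ω : V → (V → ℝ)` along the
vector field `l : V → V`: `(L_l ω) x w = (fderiv ω x (l x)) w + ω x (fderiv l x w)`. -/
noncomputable def lieCov {V : Type*} [NormedAddCommGroup V] [NormedSpace ℝ V]
    (l : V → V) (ω : V → (V →L[ℝ] ℝ)) (x w : V) : ℝ :=
  fderiv ℝ ω x (l x) w + ω x (fderiv ℝ l x w)

/-- For the perturbed metric
`g x = (1 + γ·μ x) • η + γ • (l⁰ x ⊗ v x + v x ⊗ l⁰ x)` built from a flat-null,
flat-geodesic vector field `l`, setting `F x = 1 + γ·(μ x + v x (l x))`, the Lie derivative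
along `l` of the covector field `x ↦ g x (l x, ·)` satisfies
`(L_l (g♭ l)) x w = (fderiv F x (l x) + F x · φ x) · η (l x) w`.  In particular, wherever
`F x ≠ 0`, `(L_l (g♭ l)) x = ψ x • (g x (l x, ·))` with
`ψ x = φ x + (fderiv F x (l x)) / F x`, which expresses that `l` is geodesic with respect
to `g`. -/
theorem geodesic_character_preserved
    {V : Type*} [NormedAddCommGroup V] [NormedSpace ℝ V] [FiniteDimensional ℝ V]
    (η : V →L[ℝ] V →L[ℝ] ℝ) (hη : ∀ u w : V, η u w = η w u)
    (l : V → V) (hl : Differentiable ℝ l)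
    (hnull : ∀ x, η (l x) (l x) = 0)
    (φ : V → ℝ) (hgeo : ∀ x, fderiv ℝ l x (l x) = φ x • l x)
    (μ : V → ℝ) (hμ : Differentiable ℝ μ)
    (v : V → (V →L[ℝ] ℝ)) (hv : Differentiable ℝ v)
    (γ : ℝ)
    (g : V → (V →L[ℝ] V →L[ℝ] ℝ))
    (hg : ∀ x u w, g x u w
      = (1 + γ * μ x) * η u w + γ * (η (l x) u * v x w + η (l x) w * v x u))
    (F : V → ℝ) (hF : ∀ x, F x = 1 + γ * (μ x + v x (l x))) :
    (∀ x w, lieCov l (fun y => g y (l y)) x w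
        = (fderiv ℝ F x (l x) + F x * φ x) * η (l x) w) ∧
    (∀ x, F x ≠ 0 → ∀ w, lieCov l (fun y => g y (l y)) x w
        = (φ x + fderiv ℝ F x (l x) / F x) * g x (l x) w) := by
  -- η ∘ l is differentiable, with derivative η.comp (fderiv l x)
  have hηl_diff : Differentiable ℝ (fun y => η (l y)) := η.differentiable.comp hl
  have hηl : ∀ x, fderiv ℝ (fun y => η (l y)) x = η.comp (fderiv ℝ l x) := fun x =>
    (η.hasFDerivAt.comp x (hl x).hasFDerivAt).fderiv
  -- derivative of null condition: η (l x) (∂_w l) = 0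
  have hnull' : ∀ x w, η (l x) (fderiv ℝ l x w) = 0 := by
    intro x w
    have hconst : (fun y => η (l y) (l y)) = fun _ => (0:ℝ) := funext hnull
    have h0 : fderiv ℝ (fun y => η (l y) (l y)) x = 0 := by
      rw [hconst]; exact fderiv_const_apply 0
    have hca := fderiv_clm_apply (hηl_diff x) (hl x)
    have := congrArg (fun (T : V →L[ℝ] ℝ) => T w) (h0.symm.trans hca)
    simp only [ContinuousLinearMap.add_apply, ContinuousLinearMap.comp_apply,
      ContinuousLinearMap.flip_apply, ContinuousLinearMap.zero_apply, hηl x] at this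
    have hsym : η (fderiv ℝ l x w) (l x) = η (l x) (fderiv ℝ l x w) := hη _ _
    linarith [this, hsym]
  -- the covector field is F • (η ∘ l)
  have hω : (fun y => g y (l y)) = fun y => F y • η (l y) := by
    funext y
    ext w
    rw [ContinuousLinearMap.smul_apply, smul_eq_mul, hg, hF, hnull y]
    ring
  have hF' : F = fun y => 1 + γ * (μ y + v y (l y)) := funext hF
  have hFdiff : Differentiable ℝ F := by
    rw [hF']
    exact (differentiable_const _).add
      (((hμ).add (hv.clm_apply hl)).const_mul γ)
  -- main computation
  have main : ∀ x w, lieCov l (fun y => g y (l y)) x w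
      = (fderiv ℝ F x (l x) + F x * φ x) * η (l x) w := by
    intro x w
    have hd : fderiv ℝ (fun y => F y • η (l y)) x
        = F x • η.comp (fderiv ℝ l x) + (fderiv ℝ F x).smulRight (η (l x)) := by
      rw [fderiv_fun_smul (hFdiff x) (hηl_diff x), hηl x]
    unfold lieCov
    rw [hω, hd]
    simp only [ContinuousLinearMap.add_apply, ContinuousLinearMap.smul_apply,
      ContinuousLinearMap.comp_apply, ContinuousLinearMap.smulRight_apply,
      smul_eq_mul, hgeo x, map_smul, hnull' x w]
    ring
  refine ⟨main, ?_⟩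
  intro x hFx w
  rw [main x w]
  have hglw : g x (l x) w = F x * η (l x) w := by
    rw [hg, hF, hnull x]; ring
  rw [hglw]
  field_simp
  ring
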